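/- Let μ > 0, 0 < T ≤ 1, 1/2 < s < 1, and φ ∈ H^s(ℝ). Then for all t ∈ (0, T], t^{(1-s)/2} ‖∂_x E_μ(t)φ‖_{L²} ≤ C ‖φ‖_{H^s}, where C depends only on s, μ, T, and the constant M from the symbol bound, and E_μ(t) is the semigroup with symbol e^{tΦ(ξ)}, Φ(ξ) = -ξ² + μ(1+ξ²)^{-1/2}. -/

import Mathlib

open MeasureTheory

/-- The symbol of the linear part of the Kuramoto–Sivashinsky equation. -/
noncomputable def ksSymbol (μ ξ : ℝ) : ℝ :=
  -ξ ^ 2 + μ * (1 + ξ ^ 2) ^ (-(1 : ℝ) / 2)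

/-- Pointwise symbol bound: for `0 < t ≤ 1`,
`t^((1-s)/2) |ξ| e^{tΦ(ξ)} ≤ e^μ (1+ξ²)^{s/2}`. -/
lemma ks_pointwise (μ s : ℝ) (hμ : 0 < μ) (hs0 : 0 < s) (hs2 : s < 1)
    (t : ℝ) (ht0 : 0 < t) (ht1 : t ≤ 1) (ξ : ℝ) :
    t ^ ((1 - s) / 2) * (|ξ| * Real.exp (t * ksSymbol μ ξ)) ≤
      Real.exp μ * (1 + ξ ^ 2) ^ (s / 2) := by
  set a : ℝ := (1 - s) / 2 with ha_def
  have ha0 : 0 < a := by rw [ha_def]; linarith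
  have ha1 : a ≤ 1 := by rw [ha_def]; linarith
  have h1 : (1 : ℝ) ≤ 1 + ξ ^ 2 := by nlinarith [sq_nonneg ξ]
  have hbase : (0 : ℝ) < 1 + ξ ^ 2 := by linarith
  have hpow1 : (1 + ξ ^ 2) ^ (-(1 : ℝ) / 2) ≤ 1 :=
    Real.rpow_le_one_of_one_le_of_nonpos h1 (by norm_num)
  have hpow0 : 0 ≤ (1 + ξ ^ 2) ^ (-(1 : ℝ) / 2) := Real.rpow_nonneg hbase.le _
  have hΦ : t * ksSymbol μ ξ ≤ μ + -(t * ξ ^ 2) := by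
    unfold ksSymbol
    have h6 : t * ((1 + ξ ^ 2) ^ (-(1:ℝ) / 2)) ≤ 1 := by nlinarith
    nlinarith [mul_le_mul_of_nonneg_left h6 hμ.le]
  have hexp : Real.exp (t * ksSymbol μ ξ) ≤ Real.exp μ * Real.exp (-(t * ξ ^ 2)) := by
    rw [← Real.exp_add]; exact Real.exp_le_exp.mpr hΦ
  have hξ : |ξ| ≤ (1 + ξ ^ 2) ^ ((1 : ℝ) / 2) := by
    rw [← Real.sqrt_eq_rpow, ← Real.sqrt_sq_eq_abs]
    exact Real.sqrt_le_sqrt (by nlinarith)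
  have hsplit : (1 + ξ ^ 2) ^ ((1 : ℝ) / 2) = (1 + ξ ^ 2) ^ (s / 2) * (1 + ξ ^ 2) ^ a := by
    rw [← Real.rpow_add hbase]; congr 1; rw [ha_def]; ring
  have hkey : t ^ a * (1 + ξ ^ 2) ^ a * Real.exp (-(t * ξ ^ 2)) ≤ 1 := by
    have hmul : t ^ a * (1 + ξ ^ 2) ^ a = (t * (1 + ξ ^ 2)) ^ a :=
      (Real.mul_rpow ht0.le hbase.le).symm
    have h2 : t * (1 + ξ ^ 2) ≤ 1 + t * ξ ^ 2 := by nlinarith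
    have h3 : (t * (1 + ξ ^ 2)) ^ a ≤ (1 + t * ξ ^ 2) ^ a :=
      Real.rpow_le_rpow (by positivity) h2 ha0.le
    have h4 : (1 + t * ξ ^ 2) ^ a ≤ 1 + t * ξ ^ 2 := by
      have := Real.rpow_le_rpow_of_exponent_le
        (show (1 : ℝ) ≤ 1 + t * ξ ^ 2 by nlinarith [sq_nonneg ξ]) ha1
      simpa using this
    have h5 : 1 + t * ξ ^ 2 ≤ Real.exp (t * ξ ^ 2) := by
      have := Real.add_one_le_exp (t * ξ ^ 2); linarith
    have hE : (0 : ℝ) < Real.exp (t * ξ ^ 2) := Real.exp_pos _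
    rw [hmul, Real.exp_neg]
    calc (t * (1 + ξ ^ 2)) ^ a * (Real.exp (t * ξ ^ 2))⁻¹
        ≤ Real.exp (t * ξ ^ 2) * (Real.exp (t * ξ ^ 2))⁻¹ := by
          apply mul_le_mul_of_nonneg_right (h3.trans (h4.trans h5)) (by positivity)
      _ = 1 := mul_inv_cancel₀ hE.ne'
  calc t ^ a * (|ξ| * Real.exp (t * ksSymbol μ ξ))
      ≤ t ^ a * (((1 + ξ ^ 2) ^ (s / 2) * (1 + ξ ^ 2) ^ a) *
          (Real.exp μ * Real.exp (-(t * ξ ^ 2)))) := by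
        apply mul_le_mul_of_nonneg_left _ (Real.rpow_nonneg ht0.le a)
        exact mul_le_mul (hsplit ▸ hξ) hexp (Real.exp_pos _).le (by positivity)
    _ = Real.exp μ * (1 + ξ ^ 2) ^ (s / 2) *
          (t ^ a * (1 + ξ ^ 2) ^ a * Real.exp (-(t * ξ ^ 2))) := by ring
    _ ≤ Real.exp μ * (1 + ξ ^ 2) ^ (s / 2) * 1 :=
        mul_le_mul_of_nonneg_left hkey (by positivity)
    _ = Real.exp μ * (1 + ξ ^ 2) ^ (s / 2) := mul_one _

lemma eLpNorm_real_const_mul (c : ℝ) (hc : 0 ≤ c) (g : ℝ → ℂ) :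
    eLpNorm (fun ξ : ℝ => ((c : ℂ)) * g ξ) 2 volume =
      ENNReal.ofReal c * eLpNorm g 2 volume := by
  have h : (fun ξ : ℝ => ((c : ℂ)) * g ξ) = (c : ℂ) • g := rfl
  rw [h, eLpNorm_const_smul]
  congr 1
  rw [← ofReal_norm_eq_enorm]
  simp [abs_of_nonneg hc]

theorem stmt7 (μ T s : ℝ) (hμ : 0 < μ) (hT0 : 0 < T) (hT1 : T ≤ 1)
    (hs1 : 1 / 2 < s) (hs2 : s < 1) :
    ∃ C > (0 : ℝ), ∀ t : ℝ, 0 < t → t ≤ T → ∀ f : ℝ → ℂ,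
      MemLp (fun ξ : ℝ => (((1 + ξ ^ 2) ^ (s / 2) : ℝ) : ℂ) * f ξ) 2 volume →
      ENNReal.ofReal (t ^ ((1 - s) / 2)) *
          eLpNorm (fun ξ : ℝ =>
            ((|ξ| * Real.exp (t * ksSymbol μ ξ) : ℝ) : ℂ) * f ξ) 2 volume ≤
        ENNReal.ofReal C *
          eLpNorm (fun ξ : ℝ => (((1 + ξ ^ 2) ^ (s / 2) : ℝ) : ℂ) * f ξ) 2 volume := by
  refine ⟨Real.exp μ, Real.exp_pos μ, ?_⟩
  intro t ht0 htT f _hf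
  have ht1 : t ≤ 1 := htT.trans hT1
  have hs0 : 0 < s := by linarith
  have hta : 0 ≤ t ^ ((1 - s) / 2) := Real.rpow_nonneg ht0.le _
  rw [← eLpNorm_real_const_mul _ hta, ← eLpNorm_real_const_mul _ (Real.exp_pos μ).le]
  apply eLpNorm_mono
  intro ξ
  have hbase : (0 : ℝ) < 1 + ξ ^ 2 := by positivity
  simp only [norm_mul, Complex.norm_real, Real.norm_eq_abs, ← mul_assoc]
  apply mul_le_mul_of_nonneg_right _ (norm_nonneg _)
  rw [abs_of_nonneg hta, abs_of_nonneg (Real.exp_pos μ).le, abs_abs,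
    abs_of_nonneg (Real.exp_pos (t * ksSymbol μ ξ)).le,
    abs_of_nonneg (Real.rpow_nonneg hbase.le _), mul_assoc]
  exact ks_pointwise μ s hμ hs0 hs2 t ht0 ht1 ξ
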